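/- Let f : ℕ → ℝ be concave (i.e., f(k+1) - f(k) ≤ f(k) - f(k-1) for all k ≥ 1) with f(0) = 0 and f nonnegative. Then for every k ≥ 2, the quantity x_k := f(k) + ∑_{l=1}^{k-1} (-1)^l * C(2k-l, k-l) * f(k-l) satisfies x_k ≤ 0. -/
import Mathlib

/-- Successive differences are dominated by an earlier difference. -/
lemma xk_diff_le (f : ℕ → ℝ)
    (hconc : ∀ k : ℕ, 1 ≤ k → f (k + 1) - f k ≤ f k - f (k - 1)) :
    ∀ n i : ℕ, 1 ≤ i → f (i + n + 1) - f (i + n) ≤ f (i + 1) - f i := by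
  intro n
  induction n with
  | zero => intro i _; simp
  | succ n ih =>
      intro i hi
      have h1 := hconc (i + n + 1) (by omega)
      have h2 : i + n + 1 - 1 = i + n := by omega
      rw [h2] at h1
      have := ih i hi
      have e2 : i + (n + 1) = i + n + 1 := by ring
      rw [e2]
      linarith

/-- f is monotone. -/
lemma xk_mono (f : ℕ → ℝ)
    (hconc : ∀ k : ℕ, 1 ≤ k → f (k + 1) - f k ≤ f k - f (k - 1))
    (hnonneg : ∀ k, 0 ≤ f k) : Monotone f := by
  apply monotone_nat_of_le_succ
  intro j
  by_contra hlt
  push_neg at hlt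
  set ε := f j - f (j + 1) with hε
  have hεpos : 0 < ε := by simp [hε]; linarith
  have key : ∀ n : ℕ, f (j + 1 + n) ≤ f (j + 1) - n * ε := by
    intro n
    induction n with
    | zero => simp
    | succ n ih =>
        have hd : f (j + 1 + n + 1) - f (j + 1 + n) ≤ f (j + 1 + 1) - f (j + 1) :=
          xk_diff_le f hconc n (j + 1) (by omega)
        have hd2 : f (j + 1 + 1) - f (j + 1) ≤ f (j + 1) - f j := by
          have := hconc (j + 1) (by omega)
          simpa using this
        have e : j + 1 + (n + 1) = j + 1 + n + 1 := by ring
        rw [e]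
        push_cast
        nlinarith
  obtain ⟨n, hn⟩ := exists_nat_gt (f (j + 1) / ε)
  have h1 : f (j + 1) < n * ε := by
    rw [div_lt_iff₀ hεpos] at hn
    linarith
  have h2 := key n
  have h3 := hnonneg (j + 1 + n)
  linarith

/-- f(m+1) ≤ 2 f(m) for m ≥ 1. -/
lemma xk_double (f : ℕ → ℝ)
    (hconc : ∀ k : ℕ, 1 ≤ k → f (k + 1) - f k ≤ f k - f (k - 1))
    (h0 : f 0 = 0) (hnonneg : ∀ k, 0 ≤ f k) :
    ∀ m : ℕ, 1 ≤ m → f (m + 1) ≤ 2 * f m := by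
  intro m hm
  have h1 : f (m + 1) - f m ≤ f 1 - f 0 := by
    rcases Nat.exists_eq_add_of_le hm with ⟨n, rfl⟩
    have h := xk_diff_le f hconc n 1 le_rfl
    have h2 := hconc 1 le_rfl
    norm_num at h h2 ⊢
    linarith
  have h3 : f 1 ≤ f m := xk_mono f hconc hnonneg hm
  rw [h0] at h1
  linarith

/-- pair bound: for odd a with a + 2 ≤ k, t_a + t_{a+1} ≤ 0 -/
lemma xk_pair (f : ℕ → ℝ)
    (hconc : ∀ k : ℕ, 1 ≤ k → f (k + 1) - f k ≤ f k - f (k - 1))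
    (hnonneg : ∀ k, 0 ≤ f k)
    (k a : ℕ) (ha : Odd a) (hak : a + 2 ≤ k) :
    (-1 : ℝ) ^ a * (Nat.choose (2 * k - a) (k - a) : ℝ) * f (k - a)
      + (-1 : ℝ) ^ (a + 1) * (Nat.choose (2 * k - (a + 1)) (k - (a + 1)) : ℝ) * f (k - (a + 1))
      ≤ 0 := by
  rw [ha.neg_one_pow, (Even.neg_one_pow (by exact ha.add_one))]
  have e1 : 2 * k - a = (2 * k - (a + 1)) + 1 := by omega
  have e2 : k - a = (k - (a + 1)) + 1 := by omega
  have hc : Nat.choose (2 * k - (a + 1)) (k - (a + 1)) ≤ Nat.choose (2 * k - a) (k - a) := by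
    rw [e1, e2, Nat.choose_succ_succ]
    exact Nat.le_add_right _ _
  have hf : f (k - (a + 1)) ≤ f (k - a) :=
    xk_mono f hconc hnonneg (by omega)
  have hcr : (Nat.choose (2 * k - (a + 1)) (k - (a + 1)) : ℝ)
      ≤ (Nat.choose (2 * k - a) (k - a) : ℝ) := by exact_mod_cast hc
  have h1 : (Nat.choose (2 * k - (a + 1)) (k - (a + 1)) : ℝ) * f (k - (a + 1))
      ≤ (Nat.choose (2 * k - a) (k - a) : ℝ) * f (k - a) :=
    mul_le_mul hcr hf (hnonneg _) (Nat.cast_nonneg _)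
  linarith

/-- tail bound: for odd a ≥ 1, the sum over Icc a (k-1) of the terms is ≤ 0 -/
lemma xk_tail (f : ℕ → ℝ)
    (hconc : ∀ k : ℕ, 1 ≤ k → f (k + 1) - f k ≤ f k - f (k - 1))
    (hnonneg : ∀ k, 0 ≤ f k) (k : ℕ) :
    ∀ m : ℕ, ∀ a : ℕ, a + m = k → Odd a → 1 ≤ a →
    ∑ l ∈ Finset.Icc a (k - 1),
        (-1 : ℝ) ^ l * (Nat.choose (2 * k - l) (k - l) : ℝ) * f (k - l) ≤ 0 := by
  intro m
  induction m using Nat.strong_induction_on with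
  | _ m ih =>
    intro a hak ha ha1
    match m, hak with
    | 0, hak =>
        rw [Finset.Icc_eq_empty (by omega)]
        simp
    | 1, hak =>
        have hae : a = k - 1 := by omega
        subst hae
        rw [Finset.Icc_self, Finset.sum_singleton, ha.neg_one_pow]
        have h1 : (0:ℝ) ≤ (Nat.choose (2 * k - (k-1)) (k - (k-1)) : ℝ) * f (k - (k-1)) :=
          mul_nonneg (Nat.cast_nonneg _) (hnonneg _)
        linarith
    | (m + 2), hak =>
        have hsplit : Finset.Icc a (k - 1) =
            Finset.Icc a (a + 1) ∪ Finset.Icc (a + 2) (k - 1) := by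
          ext x
          simp only [Finset.mem_Icc, Finset.mem_union]
          omega
        rw [hsplit, Finset.sum_union]
        · have h1 : Finset.Icc a (a + 1) = {a, a + 1} := by
            ext x; simp only [Finset.mem_Icc, Finset.mem_insert, Finset.mem_singleton]; omega
          rw [h1, Finset.sum_insert (by simp), Finset.sum_singleton]
          have hp := xk_pair f hconc hnonneg k a ha (by omega)
          have ht := ih m (by omega) (a + 2) (by omega)
            (by rcases ha with ⟨t, rfl⟩; exact ⟨t + 1, by ring⟩) (by omega)
          linarith
        · rw [Finset.disjoint_left]
          intro x hx hx'
          simp only [Finset.mem_Icc] at hx hx'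
          omega

/-- For a concave, nonnegative `f : ℕ → ℝ` with `f 0 = 0`, the coefficients
`x_k = f k + ∑_{l=1}^{k-1} (-1)^l C(2k-l, k-l) f(k-l)` are nonpositive for all `k ≥ 2`. -/
theorem xk_nonpos (f : ℕ → ℝ)
    (hconc : ∀ k : ℕ, 1 ≤ k → f (k + 1) - f k ≤ f k - f (k - 1))
    (h0 : f 0 = 0) (hnonneg : ∀ k, 0 ≤ f k) :
    ∀ k : ℕ, 2 ≤ k →
      f k + ∑ l ∈ Finset.Icc 1 (k - 1),
        (-1 : ℝ) ^ l * (Nat.choose (2 * k - l) (k - l) : ℝ) * f (k - l) ≤ 0 := by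
  intro k hk
  rcases eq_or_lt_of_le hk with hk2 | hk3
  · -- k = 2
    subst hk2
    simp only [show (2:ℕ) - 1 = 1 from rfl, Finset.Icc_self, Finset.sum_singleton]
    norm_num
    have hd : f 2 ≤ 2 * f 1 := by
      have := xk_double f hconc h0 hnonneg 1 le_rfl
      simpa using this
    have h1 : 0 ≤ f 1 := hnonneg 1
    linarith
  · -- k ≥ 3
    have hk3' : 3 ≤ k := hk3
    have hsplit : Finset.Icc 1 (k - 1) = Finset.Icc 1 2 ∪ Finset.Icc 3 (k - 1) := by
      ext x
      simp only [Finset.mem_Icc, Finset.mem_union]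
      omega
    rw [hsplit, Finset.sum_union]
    · have h12 : Finset.Icc 1 2 = ({1, 2} : Finset ℕ) := by decide
      rw [h12, Finset.sum_insert (by simp), Finset.sum_singleton]
      have htail := xk_tail f hconc hnonneg k (k - 3) 3 (by omega) (by decide) (by omega)
      have hhead : f k + (-1:ℝ)^1 * (Nat.choose (2*k-1) (k-1) : ℝ) * f (k-1)
          + (-1:ℝ)^2 * (Nat.choose (2*k-2) (k-2) : ℝ) * f (k-2) ≤ 0 := by
        simp only [pow_one, pow_two, neg_mul, one_mul, neg_neg, neg_one_mul]
        have hfk : f k ≤ 2 * f (k - 1) := by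
          have h := xk_double f hconc h0 hnonneg (k - 1) (by omega)
          have e : k - 1 + 1 = k := by omega
          rw [e] at h
          exact h
        have hf2 : f (k - 2) ≤ f (k - 1) :=
          xk_mono f hconc hnonneg (by omega)
        have hbin : 2 + Nat.choose (2*k-2) (k-2) ≤ Nat.choose (2*k-1) (k-1) := by
          have e1 : 2*k-1 = (2*k-2) + 1 := by omega
          have e2 : k-1 = (k-2) + 1 := by omega
          rw [e1, e2, Nat.choose_succ_succ]
          have hmid : Nat.choose (2*k-2) 1 ≤ Nat.choose (2*k-2) ((2*k-2)/2) :=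
            Nat.choose_le_middle 1 (2*k-2)
          have e3 : (2*k-2)/2 = (k-2)+1 := by omega
          rw [e3] at hmid
          rw [Nat.choose_one_right] at hmid
          simp only [Nat.succ_eq_add_one] at hmid ⊢
          omega
        have hbinR : (2:ℝ) + (Nat.choose (2*k-2) (k-2) : ℝ) ≤ (Nat.choose (2*k-1) (k-1) : ℝ) := by
          exact_mod_cast hbin
        have hf1 : 0 ≤ f (k - 1) := hnonneg _
        have hc0 : (0:ℝ) ≤ (Nat.choose (2*k-2) (k-2) : ℝ) := Nat.cast_nonneg _
        nlinarith [hnonneg (k-2)]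
      linarith
    · rw [Finset.disjoint_left]
      intro x hx hx'
      simp only [Finset.mem_Icc] at hx hx'
      omega
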